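/- Let F = α + β be a Randers norm on ℝⁿ with b = ‖β‖_α < 1, and let ξ ∈ (ℝⁿ)*, ξ ≠ 0, with y = L^{-1}(ξ). Then α(y) = (1/(1−b²)) · F*(ξ)²/α*(ξ) and β(y) = −(F*(ξ)/(1−b²)) · (β*(ξ)/α*(ξ) + b²), where F* = α* + β* is the dual Randers norm. -/

import Mathlib

open Matrix

/-- The fundamental tensor `g_{ij}(y) = (1/2)[F²]_{y^i y^j}(y)`. -/
noncomputable def gmat {n : ℕ} (F : (Fin n → ℝ) → ℝ) (y : Fin n → ℝ) :
    Matrix (Fin n) (Fin n) ℝ := fun i j =>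
  (1 / 2) * fderiv ℝ (fun z => fderiv ℝ (fun w => (F w) ^ 2) z (Pi.single i 1)) y (Pi.single j 1)

noncomputable def dotCLM {n : ℕ} (c : Fin n → ℝ) : (Fin n → ℝ) →L[ℝ] ℝ :=
  ∑ i, c i • ContinuousLinearMap.proj i

@[simp] lemma dotCLM_apply {n : ℕ} (c v : Fin n → ℝ) : dotCLM c v = c ⬝ᵥ v := by
  simp [dotCLM, dotProduct]

lemma hasFDerivAt_dot {n : ℕ} (c : Fin n → ℝ) (z : Fin n → ℝ) :
    HasFDerivAt (fun w => c ⬝ᵥ w) (dotCLM c) z := by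
  have h : (fun w : Fin n → ℝ => c ⬝ᵥ w) = ⇑(dotCLM c) :=
    funext fun v => (dotCLM_apply c v).symm
  rw [h]; exact (dotCLM c).hasFDerivAt

lemma hasFDerivAt_coord {n : ℕ} (i : Fin n) (z : Fin n → ℝ) :
    HasFDerivAt (fun w : Fin n → ℝ => w i)
      (ContinuousLinearMap.proj (R := ℝ) (φ := fun _ : Fin n => ℝ) i) z := by
  have h : (fun w : Fin n → ℝ => w i)
      = ⇑(ContinuousLinearMap.proj (R := ℝ) (φ := fun _ : Fin n => ℝ) i) := by
    funext w; simp
  rw [h]; exact (ContinuousLinearMap.proj (R := ℝ) (φ := fun _ : Fin n => ℝ) i).hasFDerivAt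

/-- derivative of the quadratic form -/
lemma hasFDerivAt_quad {n : ℕ} (a : Matrix (Fin n) (Fin n) ℝ) (z : Fin n → ℝ) :
    HasFDerivAt (fun w => w ⬝ᵥ a *ᵥ w)
      (∑ i, (z i • dotCLM (a i) + (a i ⬝ᵥ z) • ContinuousLinearMap.proj i)) z := by
  have h : ∀ i : Fin n, HasFDerivAt (fun w : Fin n → ℝ => w i * (a i ⬝ᵥ w))
      (z i • dotCLM (a i) + (a i ⬝ᵥ z) • ContinuousLinearMap.proj i) z :=
    fun i => (hasFDerivAt_coord i z).mul (hasFDerivAt_dot (a i) z)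
  have hs := HasFDerivAt.fun_sum (u := Finset.univ) (fun i _ => h i)
  have hfun : (fun w : Fin n → ℝ => ∑ i, w i * (a i ⬝ᵥ w)) = fun w => w ⬝ᵥ a *ᵥ w := by
    funext w
    simp [dotProduct, mulVec]
  rwa [hfun] at hs

lemma quadDeriv_apply {n : ℕ} (a : Matrix (Fin n) (Fin n) ℝ) (z v : Fin n → ℝ) :
    (∑ k, (z k • dotCLM (a k) +
      (a k ⬝ᵥ z) • ContinuousLinearMap.proj (R := ℝ) (φ := fun _ : Fin n => ℝ) k)) v
      = z ⬝ᵥ a *ᵥ v + (a *ᵥ z) ⬝ᵥ v := by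
  simp only [ContinuousLinearMap.coe_sum', Finset.sum_apply,
    ContinuousLinearMap.add_apply, ContinuousLinearMap.smul_apply, dotCLM_apply,
    ContinuousLinearMap.proj_apply, smul_eq_mul]
  rw [Finset.sum_add_distrib]
  congr 1

set_option maxHeartbeats 2000000 in
theorem stmt_11 {n : ℕ} (a : Matrix (Fin n) (Fin n) ℝ) (ha : a.PosDef) (b : Fin n → ℝ)
    (b2 : ℝ) (hb2 : b2 = b ⬝ᵥ (a⁻¹ *ᵥ b)) (hb : b2 < 1)
    (F : (Fin n → ℝ) → ℝ) (hF : ∀ y, F y = Real.sqrt (y ⬝ᵥ a *ᵥ y) + b ⬝ᵥ y)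
    (astar : Matrix (Fin n) (Fin n) ℝ)
    (hastar : astar = ((1 - b2) ^ 2)⁻¹ • ((1 - b2) • a⁻¹ + vecMulVec (a⁻¹ *ᵥ b) (a⁻¹ *ᵥ b)))
    (bstar : Fin n → ℝ) (hbstar : bstar = -(1 - b2)⁻¹ • (a⁻¹ *ᵥ b))
    (αstar βstar Fstar : (Fin n → ℝ) → ℝ)
    (hαstar : ∀ ξ, αstar ξ = Real.sqrt (ξ ⬝ᵥ astar *ᵥ ξ))
    (hβstar : ∀ ξ, βstar ξ = bstar ⬝ᵥ ξ)
    (hFstar : ∀ ξ, Fstar ξ = αstar ξ + βstar ξ)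
    (ξ : Fin n → ℝ) (hξ : ξ ≠ 0)
    -- y = L⁻¹(ξ) : the Legendre preimage of ξ
    (y : Fin n → ℝ) (hy : y ≠ 0) (hLy : (gmat F y) *ᵥ y = ξ) :
    Real.sqrt (y ⬝ᵥ a *ᵥ y) = (1 / (1 - b2)) * ((Fstar ξ) ^ 2 / αstar ξ) ∧
      b ⬝ᵥ y = -(Fstar ξ / (1 - b2)) * (βstar ξ / αstar ξ + b2) := by
  classical
  have hsym : aᵀ = a := by
    have h1 := ha.1
    rwa [Matrix.IsHermitian, conjTranspose_eq_transpose_of_trivial] at h1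
  have hdotsym : ∀ v w : Fin n → ℝ, v ⬝ᵥ a *ᵥ w = w ⬝ᵥ a *ᵥ v := by
    intro v w
    rw [dotProduct_mulVec, ← Matrix.mulVec_transpose, hsym, dotProduct_comm]
  have hQpos : ∀ z : Fin n → ℝ, z ≠ 0 → 0 < z ⬝ᵥ a *ᵥ z := by
    intro z hz
    have := ha.dotProduct_mulVec_pos hz
    simpa using this
  -- Cauchy-Schwarz for the form a
  have hCS : ∀ u v : Fin n → ℝ, v ≠ 0 →
      (u ⬝ᵥ a *ᵥ v) ^ 2 ≤ (u ⬝ᵥ a *ᵥ u) * (v ⬝ᵥ a *ᵥ v) := by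
    intro u v hv
    have hr : 0 < v ⬝ᵥ a *ᵥ v := hQpos v hv
    set r := v ⬝ᵥ a *ᵥ v with hrdef
    set s := u ⬝ᵥ a *ᵥ v with hsdef
    have hw : 0 ≤ (r • u - s • v) ⬝ᵥ a *ᵥ (r • u - s • v) := by
      by_cases h : r • u - s • v = 0
      · rw [h]; simp
      · exact le_of_lt (hQpos _ h)
    have h1 : v ⬝ᵥ a *ᵥ u = s := by rw [hdotsym]
    have hexp : (r • u - s • v) ⬝ᵥ a *ᵥ (r • u - s • v)
        = r ^ 2 * (u ⬝ᵥ a *ᵥ u) - 2 * r * s * s + s ^ 2 * r := by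
      simp only [Matrix.mulVec_sub, Matrix.mulVec_smul, sub_dotProduct,
        dotProduct_sub, smul_dotProduct, dotProduct_smul, smul_eq_mul]
      rw [h1]
      ring
    nlinarith [hw, hexp, hr]
  set G : (Fin n → ℝ) → ℝ := fun w => Real.sqrt (w ⬝ᵥ a *ᵥ w) + b ⬝ᵥ w with hGdef
  have hFG : F = G := funext fun w => hF w
  subst hFG
  set A := Real.sqrt (y ⬝ᵥ a *ᵥ y) with hAdef
  have hQy : 0 < y ⬝ᵥ a *ᵥ y := hQpos y hy
  have hA : 0 < A := Real.sqrt_pos.2 hQy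
  have hAne : A ≠ 0 := ne_of_gt hA
  have hA2 : A ^ 2 = y ⬝ᵥ a *ᵥ y := Real.sq_sqrt hQy.le
  set B := b ⬝ᵥ y with hBdef
  set F0 : ℝ := A + B with hF0def
  have hGyv : G y = F0 := rfl
  -- THE KEY STEP : ξ = F0 • (A⁻¹ • (a *ᵥ y) + b)
  have key : ξ = F0 • (A⁻¹ • (a *ᵥ y) + b) := by
    rw [← hLy]
    funext i
    -- the inner fderiv as explicit function ψ on the complement of 0
    set ψ : (Fin n → ℝ) → ℝ :=
      fun z => 2 * G z * ((a *ᵥ z) i * (Real.sqrt (z ⬝ᵥ a *ᵥ z))⁻¹ + b i) with hψdef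
    have hφψ : ∀ z : Fin n → ℝ, z ≠ 0 →
        fderiv ℝ (fun w => (G w) ^ 2) z (Pi.single i 1) = ψ z := by
      intro z hz
      have hQz := hQpos z hz
      have hsz : Real.sqrt (z ⬝ᵥ a *ᵥ z) ≠ 0 := ne_of_gt (Real.sqrt_pos.2 hQz)
      have hGz : HasFDerivAt G
          ((1 / (2 * Real.sqrt (z ⬝ᵥ a *ᵥ z))) •
            (∑ k, (z k • dotCLM (a k) + (a k ⬝ᵥ z) • ContinuousLinearMap.proj k)) +
            dotCLM b) z :=
        ((hasFDerivAt_quad a z).sqrt (ne_of_gt hQz)).add (hasFDerivAt_dot b z)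
      have hsq : HasFDerivAt (fun w => (G w) ^ 2)
          (G z • ((1 / (2 * Real.sqrt (z ⬝ᵥ a *ᵥ z))) •
            (∑ k, (z k • dotCLM (a k) + (a k ⬝ᵥ z) • ContinuousLinearMap.proj k)) +
            dotCLM b) +
           G z • ((1 / (2 * Real.sqrt (z ⬝ᵥ a *ᵥ z))) •
            (∑ k, (z k • dotCLM (a k) + (a k ⬝ᵥ z) • ContinuousLinearMap.proj k)) +
            dotCLM b)) z := by
        have h := hGz.mul hGz
        have heq2 : (fun w => (G w) ^ 2) = fun w => G w * G w := by funext w; ring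
        rw [heq2]; exact h
      rw [hsq.fderiv]
      simp only [ContinuousLinearMap.add_apply, ContinuousLinearMap.smul_apply,
        dotCLM_apply, smul_eq_mul, quadDeriv_apply]
      have h1 : z ⬝ᵥ a *ᵥ Pi.single i 1 = (a *ᵥ z) i := by
        rw [hdotsym]
        simp [mulVec, single_dotProduct]
      have h2 : (a *ᵥ z) ⬝ᵥ Pi.single i 1 = (a *ᵥ z) i := by simp [dotProduct_single]
      have h3 : b ⬝ᵥ Pi.single i 1 = b i := by simp [dotProduct_single]
      rw [h1, h2, h3, hψdef]
      field_simp
      ring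
    -- derivative of ψ at y
    set S : (Fin n → ℝ) →L[ℝ] ℝ :=
      ∑ k, (y k • dotCLM (a k) + (a k ⬝ᵥ y) • ContinuousLinearMap.proj k) with hSdef
    set ℓ : (Fin n → ℝ) →L[ℝ] ℝ := (1 / (2 * A)) • S + dotCLM b with hℓdef
    have hGy' : HasFDerivAt G ℓ y :=
      ((hasFDerivAt_quad a y).sqrt (ne_of_gt hQy)).add (hasFDerivAt_dot b y)
    have hu : HasFDerivAt (fun z : Fin n → ℝ => (a *ᵥ z) i) (dotCLM (a i)) y := by
      have h : (fun z : Fin n → ℝ => (a *ᵥ z) i) = fun z => a i ⬝ᵥ z := by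
        funext z; simp [mulVec]
      rw [h]; exact hasFDerivAt_dot (a i) y
    have hs : HasFDerivAt (fun z : Fin n → ℝ => Real.sqrt (z ⬝ᵥ a *ᵥ z))
        ((1 / (2 * A)) • S) y := (hasFDerivAt_quad a y).sqrt (ne_of_gt hQy)
    have hr : HasFDerivAt (fun z : Fin n → ℝ => (Real.sqrt (z ⬝ᵥ a *ᵥ z))⁻¹)
        ((-(A ^ 2)⁻¹) • ((1 / (2 * A)) • S)) y :=
      (hasDerivAt_inv hAne).comp_hasFDerivAt y hs
    set D : (Fin n → ℝ) →L[ℝ] ℝ :=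
      (a *ᵥ y) i • ((-(A ^ 2)⁻¹) • ((1 / (2 * A)) • S)) + A⁻¹ • dotCLM (a i) with hDdef
    have hinner : HasFDerivAt
        (fun z : Fin n → ℝ => (a *ᵥ z) i * (Real.sqrt (z ⬝ᵥ a *ᵥ z))⁻¹ + b i) D y :=
      (hu.mul hr).add_const (b i)
    set M : (Fin n → ℝ) →L[ℝ] ℝ :=
      (2 * G y) • D + ((a *ᵥ y) i * A⁻¹ + b i) • ((2:ℝ) • ℓ) with hMdef
    have hψd : HasFDerivAt ψ M y := by
      have h2G : HasFDerivAt (fun z => 2 * G z) ((2:ℝ) • ℓ) y := hGy'.const_mul 2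
      exact h2G.mul hinner
    have hfd : fderiv ℝ (fun z => fderiv ℝ (fun w => (G w) ^ 2) z (Pi.single i 1)) y = M := by
      have hev : (fun z => fderiv ℝ (fun w => (G w) ^ 2) z (Pi.single i 1)) =ᶠ[nhds y] ψ := by
        refine Filter.eventually_of_mem ((isOpen_compl_singleton (x := (0 : Fin n → ℝ))).mem_nhds ?_) ?_
        · simpa using hy
        · intro z hz
          exact hφψ z (by simpa using hz)
      rw [hev.fderiv_eq, hψd.fderiv]
    -- evaluate M at vectors
    have hSy : S y = 2 * (y ⬝ᵥ a *ᵥ y) := by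
      rw [hSdef, quadDeriv_apply, dotProduct_comm]
      ring
    have hMapp : ∀ v, M v = (2 * G y) * ((a *ᵥ y) i * ((-(A ^ 2)⁻¹) * ((1 / (2 * A)) * S v))
        + A⁻¹ * (a i ⬝ᵥ v))
        + ((a *ᵥ y) i * A⁻¹ + b i) * (2 * ((1 / (2 * A)) * S v + b ⬝ᵥ v)) := by
      intro v
      simp [hMdef, hDdef, hℓdef, ContinuousLinearMap.add_apply,
        ContinuousLinearMap.smul_apply, dotCLM_apply, smul_eq_mul]
      ring
    -- now compute (gmat G y *ᵥ y) i
    have hyrep : y = ∑ j, y j • (Pi.single j 1 : Fin n → ℝ) := by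
      funext k
      simp [Pi.single_apply, Finset.sum_apply]
    have hMy : M y = ∑ j, y j * M (Pi.single j 1) := by
      conv_lhs => rw [hyrep]
      rw [map_sum]
      simp [smul_eq_mul]
    have hmulv : (gmat G y *ᵥ y) i = ∑ j, (1 / 2 * M (Pi.single j 1)) * y j := by
      simp only [mulVec, dotProduct, gmat, hfd]
    rw [hmulv]
    have hsum : ∑ j, (1 / 2 * M (Pi.single j 1)) * y j = 1 / 2 * M y := by
      rw [hMy, Finset.mul_sum]
      apply Finset.sum_congr rfl
      intro j _
      ring
    rw [hsum]
    -- finish : compute M y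
    have hay : a i ⬝ᵥ y = (a *ᵥ y) i := by simp [mulVec]
    have hby : b ⬝ᵥ y = B := rfl
    rw [hMapp y, hSy, hay, hby, hGyv]
    show 1 / 2 * _ = F0 * (A⁻¹ * (a *ᵥ y) i + b i)
    rw [← hA2]
    field_simp
    ring
  -- ALGEBRA PART
  clear hLy
  set u : Fin n → ℝ := a⁻¹ *ᵥ b with hudef
  have hdet : IsUnit a.det := ha.det_pos.ne'.isUnit
  have hau : a *ᵥ u = b := by
    rw [hudef, mulVec_mulVec, Matrix.mul_nonsing_inv a hdet, one_mulVec]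
  have hainvy : a⁻¹ *ᵥ (a *ᵥ y) = y := by
    rw [mulVec_mulVec, Matrix.nonsing_inv_mul a hdet, one_mulVec]
  have huay : u ⬝ᵥ (a *ᵥ y) = B := by
    rw [hdotsym u y, hau, dotProduct_comm]
  have hub : u ⬝ᵥ b = b2 := by rw [dotProduct_comm]; exact hb2.symm
  have hb2' : b2 = u ⬝ᵥ a *ᵥ u := by rw [hau, dotProduct_comm]; exact hb2
  have hb2nn : 0 ≤ b2 := by
    rcases eq_or_ne u 0 with h | h
    · rw [hb2', h]; simp
    · exact le_of_lt (hb2' ▸ hQpos u h)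
  have hBB : B ^ 2 ≤ b2 * A ^ 2 := by
    have := hCS u y hy
    rw [huay, ← hb2', ← hA2] at this
    linarith [this]
  have hF0 : 0 < F0 := by
    have habs : B ^ 2 < A ^ 2 := by nlinarith [hBB, hA, hb]
    rw [hF0def]
    nlinarith [habs, hA, sq_nonneg (A + B), sq_nonneg (A - B)]
  have hF0ne : F0 ≠ 0 := ne_of_gt hF0
  have h1b2 : (0:ℝ) < 1 - b2 := by linarith
  have h1b2ne : (1:ℝ) - b2 ≠ 0 := ne_of_gt h1b2
  -- u ⬝ᵥ ξ
  have huξ : u ⬝ᵥ ξ = F0 * (A⁻¹ * B + b2) := by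
    rw [key]
    simp only [dotProduct_smul, dotProduct_add, smul_eq_mul, huay, hub]
  -- βstar value
  have hβv : βstar ξ = -(1 - b2)⁻¹ * (F0 * (A⁻¹ * B + b2)) := by
    rw [hβstar, hbstar, ← huξ]
    simp [smul_dotProduct, smul_eq_mul]
  -- a⁻¹ *ᵥ ξ
  have hainvξ : a⁻¹ *ᵥ ξ = F0 • (A⁻¹ • y + u) := by
    rw [key]
    rw [mulVec_smul, mulVec_add, mulVec_smul, hainvy]
  -- ξ ⬝ᵥ a⁻¹ *ᵥ ξ
  have hξaξ : ξ ⬝ᵥ (a⁻¹ *ᵥ ξ) = F0 ^ 2 * (1 + 2 * (A⁻¹ * B) + b2) := by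
    rw [hainvξ]
    nth_rewrite 1 [key]
    simp only [dotProduct_smul, smul_dotProduct, dotProduct_add, add_dotProduct,
      smul_eq_mul, smul_add, smul_smul]
    have e1 : (a *ᵥ y) ⬝ᵥ y = A ^ 2 := by rw [dotProduct_comm, hA2]
    have e2 : (a *ᵥ y) ⬝ᵥ u = B := by rw [dotProduct_comm]; exact huay
    have e3 : b ⬝ᵥ u = b2 := by rw [dotProduct_comm]; exact hub
    simp only [dotProduct_add, dotProduct_smul, smul_eq_mul, e1, e2, e3, hBdef]
    field_simp
    ring
  -- vecMulVec application
  have hvmv : (vecMulVec u u) *ᵥ ξ = (u ⬝ᵥ ξ) • u := by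
    funext k
    simp [vecMulVec_apply, mulVec, dotProduct, Finset.mul_sum, Pi.smul_apply, smul_eq_mul]
    rw [Finset.sum_congr rfl (fun j _ => by ring : ∀ j ∈ Finset.univ, u k * u j * ξ j = u j * ξ j * u k), ← Finset.sum_mul]
  -- ξ ⬝ᵥ astar *ᵥ ξ
  have hξastarξ : ξ ⬝ᵥ astar *ᵥ ξ = (F0 ^ 2 / ((1 - b2) * A)) ^ 2 := by
    rw [hastar]
    rw [smul_mulVec, add_mulVec, smul_mulVec, hvmv]
    rw [dotProduct_smul, dotProduct_add, dotProduct_smul, dotProduct_smul]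
    rw [hξaξ]
    have : ξ ⬝ᵥ u = F0 * (A⁻¹ * B + b2) := by rw [dotProduct_comm]; exact huξ
    rw [this, huξ]
    simp only [smul_eq_mul]
    field_simp
    ring
  have hαv : αstar ξ = F0 ^ 2 / ((1 - b2) * A) := by
    rw [hαstar, hξastarξ]
    exact Real.sqrt_sq (by positivity)
  have hFv : Fstar ξ = F0 := by
    rw [hFstar, hαv, hβv, hF0def]
    field_simp
    ring
  constructor
  · rw [hFv, hαv]
    field_simp
  · rw [hFv, hαv, hβv, hF0def]
    field_simp [show A + B ≠ 0 from hF0ne]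
    ring
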